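/- Let u be the convex envelope of f, suppose f is differentiable at y ∈ Ω with u(y) = f(y), and let p be a subgradient of u at y. Then p = ∇f(y). Consequently, if additionally |∇f(z) − ∇f(y)| ≤ H|z−y|^α for all z, then for every x with the segment [y,x] ⊂ Ω̄, f(x) − u(x) ≤ f(x) − f(y) − ∇f(y)·(x−y) ≤ (H/(1+α)) |x−y|^{1+α}. -/

import Mathlib

open scoped RealInnerProductSpace

/-- At an interior contact point `y` where `f` is differentiable, every subgradient `p`
of the convex envelope `u` equals `∇f(y)`; consequently, if `∇f` is `α`-Hölder with
constant `H`, then for any `x` with `[y,x] ⊆ closure Ω`,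
`f(x) - u(x) ≤ f(x) - f(y) - ∇f(y)·(x-y) ≤ (H/(1+α)) |x-y|^{1+α}`. -/
theorem subgradient_eq_grad_at_contact
    (d : ℕ) (Ω : Set (EuclideanSpace ℝ (Fin d)))
    (hΩo : IsOpen Ω) (hΩc : Convex ℝ Ω) (hΩb : Bornology.IsBounded Ω)
    (f u : EuclideanSpace ℝ (Fin d) → ℝ)
    (hf : ContinuousOn f (closure Ω))
    (hu_cvx : ConvexOn ℝ (closure Ω) u)
    (hu_le : ∀ x ∈ closure Ω, u x ≤ f x)
    (hu_max : ∀ v : EuclideanSpace ℝ (Fin d) → ℝ, ConvexOn ℝ (closure Ω) v →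
        (∀ x ∈ closure Ω, v x ≤ f x) → ∀ x ∈ closure Ω, v x ≤ u x)
    (y : EuclideanSpace ℝ (Fin d)) (hy : y ∈ Ω)
    (gfy : EuclideanSpace ℝ (Fin d)) (hdiff : HasGradientAt f gfy y)
    (hcontact : u y = f y)
    (p : EuclideanSpace ℝ (Fin d))
    (hp : ∀ z ∈ closure Ω, u y + ⟪p, z - y⟫ ≤ u z) :
    p = gfy ∧
      ∀ (gf : EuclideanSpace ℝ (Fin d) → EuclideanSpace ℝ (Fin d)) (H α : ℝ),
        0 < α → α ≤ 1 → 0 ≤ H → gf y = gfy →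
        (∀ z ∈ closure Ω, HasGradientAt f (gf z) z) →
        (∀ z ∈ closure Ω, ‖gf z - gf y‖ ≤ H * ‖z - y‖ ^ α) →
        ∀ x ∈ closure Ω, segment ℝ y x ⊆ closure Ω →
          f x - u x ≤ f x - f y - ⟪gfy, x - y⟫ ∧
          f x - f y - ⟪gfy, x - y⟫ ≤ (H / (1 + α)) * ‖x - y‖ ^ (1 + α) := by
  have hpg : p = gfy := by
    apply ext_inner_right ℝ
    intro v
    set c : ℝ → EuclideanSpace ℝ (Fin d) := fun t => y + t • v with hc
    have hcderiv : HasDerivAt c v 0 := by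
      simpa [hc] using ((hasDerivAt_id (0 : ℝ)).smul_const v).const_add y
    have hc0 : c 0 = y := by simp [hc]
    have hmem : ∀ᶠ t in nhds (0 : ℝ), c t ∈ Ω := by
      have hcont : ContinuousAt c 0 := hcderiv.continuousAt
      rw [ContinuousAt, hc0] at hcont
      exact hcont (hΩo.mem_nhds hy)
    set φ : ℝ → ℝ := fun t => f (c t) - u y - t * ⟪p, v⟫ with hφ
    have hmin : IsLocalMin φ 0 := by
      have h0 : φ 0 = 0 := by simp [hφ, hc0, hcontact]
      rw [IsLocalMin, IsMinFilter, h0]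
      filter_upwards [hmem] with t ht
      have h1 := hp (c t) (subset_closure ht)
      have h2 := hu_le (c t) (subset_closure ht)
      have h3 : ⟪p, c t - y⟫ = t * ⟪p, v⟫ := by
        have hct : c t - y = t • v := by simp [hc]
        rw [hct, real_inner_smul_right]
      simp only [hφ]
      nlinarith [h1, h2, h3]
    have hfd : HasDerivAt (fun t => f (c t)) ⟪gfy, v⟫ 0 := by
      have := hdiff.hasFDerivAt
      rw [← hc0] at this
      exact (this.comp_hasDerivAt 0 hcderiv).congr_deriv (by simp [InnerProductSpace.toDual_apply_apply])
    have hd : HasDerivAt φ (⟪gfy, v⟫ - ⟪p, v⟫) 0 :=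
      (hfd.sub_const (u y)).sub (hasDerivAt_mul_const ⟪p, v⟫)
    have := hmin.hasDerivAt_eq_zero hd
    linarith [sub_eq_zero.mp this]
  refine ⟨hpg, ?_⟩
  intro gf H α hα hα1 hH hgfy hgrad hhold x hx hseg
  have hux : f y + ⟪gfy, x - y⟫ ≤ u x := by
    have := hp x hx
    rwa [hcontact, hpg] at this
  refine ⟨by linarith, ?_⟩
  set C := ‖x - y‖ with hC
  have hC0 : (0 : ℝ) ≤ C := norm_nonneg _
  have hα0 : (1 : ℝ) + α ≠ 0 := by positivity
  set γ : ℝ → EuclideanSpace ℝ (Fin d) := fun t => y + t • (x - y) with hγ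
  have hγmem : ∀ t ∈ Set.Icc (0 : ℝ) 1, γ t ∈ closure Ω := by
    intro t ht
    apply hseg
    rw [segment_eq_image']
    exact ⟨t, ht, rfl⟩
  have hγd : ∀ t : ℝ, HasDerivAt γ (x - y) t := by
    intro t
    simpa [hγ] using ((hasDerivAt_id t).smul_const (x - y)).const_add y
  have hgd : ∀ t ∈ Set.Icc (0 : ℝ) 1,
      HasDerivAt (fun s => f (γ s)) ⟪gf (γ t), x - y⟫ t := by
    intro t ht
    have := (hgrad (γ t) (hγmem t ht)).hasFDerivAt
    exact (this.comp_hasDerivAt t (hγd t)).congr_deriv (by simp [InnerProductSpace.toDual_apply_apply])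
  set h : ℝ → ℝ := fun t =>
    f (γ t) - f y - t * ⟪gfy, x - y⟫ - H / (1 + α) * t ^ (1 + α) * C ^ (1 + α) with hh
  have hhd : ∀ t ∈ Set.Ioo (0 : ℝ) 1,
      HasDerivAt h (⟪gf (γ t), x - y⟫ - ⟪gfy, x - y⟫
        - H / (1 + α) * ((1 + α) * t ^ α) * C ^ (1 + α)) t := by
    intro t ht
    have h1 : HasDerivAt (fun s : ℝ => s ^ (1 + α)) ((1 + α) * t ^ α) t := by
      have := Real.hasDerivAt_rpow_const (x := t) (p := 1 + α) (Or.inl (ne_of_gt ht.1))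
      simpa using this
    exact (((hgd t ⟨le_of_lt ht.1, le_of_lt ht.2⟩).sub_const (f y)).sub
        (hasDerivAt_mul_const ⟪gfy, x - y⟫)).sub
      ((h1.const_mul (H / (1 + α))).mul_const (C ^ (1 + α)))
  have hcont : ContinuousOn h (Set.Icc 0 1) := by
    intro t ht
    apply ContinuousAt.continuousWithinAt
    have h1 : ContinuousAt (fun s => f (γ s)) t := (hgd t ht).continuousAt
    have h2 : ContinuousAt (fun s : ℝ => s ^ (1 + α)) t :=
      Real.continuousAt_rpow_const t (1 + α) (Or.inr (by positivity))
    exact (((h1.sub continuousAt_const).sub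
      ((continuousAt_id).mul continuousAt_const)).sub
      ((h2.const_mul _).mul continuousAt_const))
  have hderiv_nonpos : ∀ t ∈ interior (Set.Icc (0 : ℝ) 1), deriv h t ≤ 0 := by
    rw [interior_Icc]
    intro t ht
    rw [(hhd t ht).deriv]
    have ht0 : (0 : ℝ) < t := ht.1
    have hbound : ⟪gf (γ t) - gfy, x - y⟫ ≤ H * t ^ α * C ^ (1 + α) := by
      have b1 : ⟪gf (γ t) - gfy, x - y⟫ ≤ ‖gf (γ t) - gfy‖ * C :=
        real_inner_le_norm _ _
      have b2 : ‖gf (γ t) - gfy‖ ≤ H * ‖γ t - y‖ ^ α := by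
        rw [← hgfy]; exact hhold (γ t) (hγmem t ⟨le_of_lt ht.1, le_of_lt ht.2⟩)
      have b3 : ‖γ t - y‖ = t * C := by
        simp [hγ, norm_smul, abs_of_pos ht0, hC]
      have b4 : (t * C) ^ α = t ^ α * C ^ α :=
        Real.mul_rpow (le_of_lt ht0) hC0
      have b5 : C ^ (1 + α) = C * C ^ α := by
        rw [Real.rpow_add' hC0 hα0, Real.rpow_one]
      have htα : (0 : ℝ) ≤ t ^ α := Real.rpow_nonneg (le_of_lt ht0) α
      have hCα : (0 : ℝ) ≤ C ^ α := Real.rpow_nonneg hC0 α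
      calc ⟪gf (γ t) - gfy, x - y⟫ ≤ ‖gf (γ t) - gfy‖ * C := b1
        _ ≤ H * ‖γ t - y‖ ^ α * C := by nlinarith [norm_nonneg (gf (γ t) - gfy)]
        _ = H * t ^ α * C ^ (1 + α) := by rw [b3, b4, b5]; ring
    have hsimp : H / (1 + α) * ((1 + α) * t ^ α) * C ^ (1 + α)
        = H * t ^ α * C ^ (1 + α) := by
      field_simp
    rw [hsimp]
    have := inner_sub_left (𝕜 := ℝ) (gf (γ t)) gfy (x - y)
    linarith [hbound, this.symm.le, this.le]
  have hanti : AntitoneOn h (Set.Icc 0 1) := by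
    apply antitoneOn_of_deriv_nonpos (convex_Icc 0 1) hcont
    · rw [interior_Icc]
      intro t ht
      exact ((hhd t ht).differentiableAt).differentiableWithinAt
    · exact hderiv_nonpos
  have key : h 1 ≤ h 0 :=
    hanti (Set.left_mem_Icc.mpr zero_le_one) (Set.right_mem_Icc.mpr zero_le_one)
      zero_le_one
  have h0 : h 0 = 0 := by
    simp [hh, hγ, Real.zero_rpow hα0]
  have h1 : h 1 = f x - f y - ⟪gfy, x - y⟫ - H / (1 + α) * C ^ (1 + α) := by
    simp [hh, hγ, Real.one_rpow]
  rw [h0, h1] at key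
  linarith
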